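/- If a Tychonoff space X is such that its Stone–Čech compactification βX is openly factorizable, then X is pseudocompact. -/

import Mathlib

/-- A space `X` is openly factorizable if every continuous map to a second countable space `Y`
factors as `g ∘ p` with `p` a continuous open surjection onto a second countable space. -/
def OpenlyFactorizable (X : Type*) [TopologicalSpace X] : Prop :=
  ∀ (Y : Type) (_ : TopologicalSpace Y), SecondCountableTopology Y →
    ∀ f : X → Y, Continuous f →
      ∃ (Z : Type) (_ : TopologicalSpace Z), SecondCountableTopology Z ∧
        ∃ (p : X → Z) (g : Z → Y),
          Continuous p ∧ IsOpenMap p ∧ Function.Surjective p ∧ Continuous g ∧ f = g ∘ p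

private lemma gap_of_step (t : ℕ → ℝ) (h : ∀ n, t n + 6 < t (n + 1)) :
    ∀ a b : ℕ, a < b → t a + 6 < t b := by
  intro a b hab
  induction b with
  | zero => omega
  | succ b ih =>
    rcases Nat.lt_succ_iff_lt_or_eq.mp hab with h' | h'
    · have h1 := ih h'
      have h2 := h b
      linarith
    · subst h'; exact h a

private lemma clamp_mem (r : ℝ) : min 1 (max 0 r) ∈ unitInterval :=
  ⟨le_min zero_le_one (le_max_left _ _), min_le_left _ _⟩

/-- Proposition 2.3 (one direction): if the Stone–Čech compactification `βX` of a Tychonoff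
space `X` is openly factorizable, then `X` is pseudocompact (every continuous real-valued
function on `X` is bounded). -/
theorem stmt_4 (X : Type) [TopologicalSpace X] [T35Space X]
    (h : OpenlyFactorizable (StoneCech X)) :
    ∀ f : X → ℝ, Continuous f → ∃ M : ℝ, ∀ x : X, |f x| ≤ M := by
  intro f hf
  by_contra hM
  push_neg at hM
  -- pick a sequence of points with |f| values spaced ≥ 6 apart
  choose pick hpick using hM
  set xs : ℕ → X := fun n => Nat.rec (pick 0) (fun _ xp => pick (|f xp| + 6)) n with hxs
  set t : ℕ → ℝ := fun n => |f (xs n)| with ht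
  have hstep : ∀ n, t n + 6 < t (n + 1) := fun n => hpick (|f (xs n)| + 6)
  have hgap : ∀ a b : ℕ, a ≠ b → 6 ≤ |t a - t b| := by
    intro a b hab
    rcases lt_or_gt_of_ne hab with h' | h'
    · have := gap_of_step t hstep a b h'
      rw [abs_sub_comm]
      rw [abs_of_nonneg (by linarith)]
      linarith
    · have := gap_of_step t hstep b a h'
      rw [abs_of_nonneg (by linarith)]
      linarith
  -- the bump functions
  set uI : ℕ → X → unitInterval :=
    fun n x => ⟨min 1 (max 0 (1 - |(|f x|) - t n|)), clamp_mem _⟩ with huI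
  have hcont_u : ∀ n, Continuous (uI n) := by
    intro n
    apply Continuous.subtype_mk
    exact continuous_const.min (continuous_const.max (continuous_const.sub
      ((continuous_abs.comp hf).sub continuous_const).abs))
  -- Stone–Čech extensions and the bundled map
  set En : ℕ → StoneCech X → unitInterval := fun n => stoneCechExtend (hcont_u n) with hEn
  set H : StoneCech X → (ℕ → unitInterval) := fun w n => En n w with hH
  have Hcont : Continuous H := continuous_pi fun n => continuous_stoneCechExtend _
  obtain ⟨Z, tZ, hsc, p, g, hpc, hpo, hps, hgc, hfeq⟩ :=
    h (ℕ → unitInterval) inferInstance inferInstance H Hcont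
  letI := tZ
  haveI := hsc
  have hKZ : IsCompact (Set.univ : Set Z) := by
    have h1 := (isCompact_univ : IsCompact (Set.univ : Set (StoneCech X))).image hpc
    rwa [Set.image_univ, Set.range_eq_univ.mpr hps] at h1
  -- key identity: En n w = g (p w) n
  have hEg : ∀ n w, En n w = g (p w) n := by
    intro n w
    have := congrFun hfeq w
    exact congrFun this n
  -- open sets in Z and βX
  set G : ℕ → Set Z := fun n => {z | (1:ℝ)/2 < ((g z n : unitInterval) : ℝ)} with hG
  set U : ℕ → Set (StoneCech X) := fun n => {w | (1:ℝ)/2 < ((En n w : unitInterval) : ℝ)} with hU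
  have hUG : ∀ n, p ⁻¹' (G n) = U n := by
    intro n
    ext w
    simp only [hG, hU, Set.mem_preimage, Set.mem_setOf_eq, hEg n w]
  have hUopen : ∀ n, IsOpen (U n) := by
    intro n
    exact isOpen_lt continuous_const (continuous_subtype_val.comp (continuous_stoneCechExtend _))
  -- the sequence in Z
  set zs : ℕ → Z := fun n => p (stoneCechUnit (xs n)) with hzs
  have hEnxs : ∀ n, En n (stoneCechUnit (xs n)) = uI n (xs n) :=
    fun n => congrFun (stoneCechExtend_extends (hcont_u n)) (xs n)
  have hzsG : ∀ n, zs n ∈ G n := by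
    intro n
    show (1:ℝ)/2 < ((g (p (stoneCechUnit (xs n))) n : unitInterval) : ℝ)
    rw [← hEg n (stoneCechUnit (xs n)), hEnxs n]
    show (1:ℝ)/2 < min 1 (max 0 (1 - |(|f (xs n)|) - t n|))
    have : (|f (xs n)|) - t n = 0 := by rw [ht]; ring
    rw [this]
    norm_num
  -- convergent subsequence
  obtain ⟨zb, -, φ, hφ, hconv⟩ := hKZ.tendsto_subseq (fun n => Set.mem_univ (zs n))
  -- the separating function built from the subsequence
  set TS : Set ℝ := Set.range (fun k => t (φ (2 * k))) with hTS
  have hTSne : TS.Nonempty := ⟨t (φ 0), ⟨0, by norm_num⟩⟩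
  set vS : X → unitInterval :=
    fun x => ⟨min 1 (max 0 (2 - Metric.infDist (|f x|) TS)), clamp_mem _⟩ with hvS
  have hcont_v : Continuous vS := by
    apply Continuous.subtype_mk
    exact continuous_const.min (continuous_const.max (continuous_const.sub
      ((Metric.continuous_infDist_pt TS).comp (continuous_abs.comp hf))))
  set Ev : StoneCech X → unitInterval := stoneCechExtend hcont_v with hEv
  have hEvxs : ∀ x, Ev (stoneCechUnit x) = vS x :=
    fun x => congrFun (stoneCechExtend_extends hcont_v) x
  -- basic numeric extraction: membership in U n at a point of X gives |f| near t n
  have hnear : ∀ n x, stoneCechUnit x ∈ U n → |(|f x|) - t n| < 1/2 := by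
    intro n x hx
    have heq : En n (stoneCechUnit x) = uI n x :=
      congrFun (stoneCechExtend_extends (hcont_u n)) x
    have h1 : (1:ℝ)/2 < min 1 (max 0 (1 - |(|f x|) - t n|)) := by
      have h1' := hx
      simp only [hU, Set.mem_setOf_eq] at h1'
      rwa [heq] at h1'
    have h2 : (1:ℝ)/2 < max 0 (1 - |(|f x|) - t n|) := lt_of_lt_of_le h1 (min_le_right _ _)
    by_contra hcon
    push_neg at hcon
    have : max 0 (1 - |(|f x|) - t n|) ≤ 1/2 := by
      apply max_le (by norm_num)
      linarith
    linarith
  -- (A): on the even bands, vS = 1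
  have hA : ∀ k x, stoneCechUnit x ∈ U (φ (2 * k)) → vS x = 1 := by
    intro k x hx
    have hd := hnear _ _ hx
    have hle : Metric.infDist (|f x|) TS < 1/2 := by
      calc Metric.infDist (|f x|) TS ≤ dist (|f x|) (t (φ (2 * k))) :=
            Metric.infDist_le_dist_of_mem ⟨k, rfl⟩
        _ < 1/2 := by rwa [Real.dist_eq]
    apply Subtype.ext
    show min 1 (max 0 (2 - Metric.infDist (|f x|) TS)) = 1
    have h1 : (1:ℝ) ≤ 2 - Metric.infDist (|f x|) TS := by linarith
    rw [max_eq_right (by linarith), min_eq_left h1]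
  -- (B): on the odd bands, vS = 0
  have hB : ∀ k x, stoneCechUnit x ∈ U (φ (2 * k + 1)) → vS x = 0 := by
    intro k x hx
    have hd := hnear _ _ hx
    have hge : (2:ℝ) ≤ Metric.infDist (|f x|) TS := by
      by_contra hcon
      push_neg at hcon
      obtain ⟨y, ⟨j, rfl⟩, hy⟩ := (Metric.infDist_lt_iff hTSne).mp hcon
      rw [Real.dist_eq] at hy
      have hne : φ (2 * k + 1) ≠ φ (2 * j) := hφ.injective.ne (by omega)
      have h6 := hgap _ _ hne
      have e1 := abs_lt.mp hd
      have e2 := abs_lt.mp hy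
      rcases le_abs.mp h6 with h' | h' <;> linarith [e1.1, e1.2, e2.1, e2.2]
    apply Subtype.ext
    show min 1 (max 0 (2 - Metric.infDist (|f x|) TS)) = 0
    rw [max_eq_left (by linarith)]
    norm_num
  -- transport to closures in βX
  have hdense : Dense (Set.range (stoneCechUnit : X → StoneCech X)) := denseRange_stoneCechUnit
  have hclosA : closure (⋃ k, U (φ (2 * k))) ⊆ Ev ⁻¹' {1} := by
    apply closure_minimal _ (isClosed_singleton.preimage (continuous_stoneCechExtend _))
    apply Set.iUnion_subset
    intro k
    intro w hw
    have hsub : U (φ (2 * k)) ∩ Set.range (stoneCechUnit : X → StoneCech X) ⊆ Ev ⁻¹' {1} := by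
      rintro w' ⟨hw', x, rfl⟩
      simp only [Set.mem_preimage, Set.mem_singleton_iff]
      rw [hEvxs x]
      exact hA k x hw'
    have := hdense.open_subset_closure_inter (hUopen (φ (2 * k))) hw
    exact (closure_minimal hsub (isClosed_singleton.preimage (continuous_stoneCechExtend _))) this
  have hclosB : closure (⋃ k, U (φ (2 * k + 1))) ⊆ Ev ⁻¹' {0} := by
    apply closure_minimal _ (isClosed_singleton.preimage (continuous_stoneCechExtend _))
    apply Set.iUnion_subset
    intro k
    intro w hw
    have hsub : U (φ (2 * k + 1)) ∩ Set.range (stoneCechUnit : X → StoneCech X) ⊆ Ev ⁻¹' {0} := by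
      rintro w' ⟨hw', x, rfl⟩
      simp only [Set.mem_preimage, Set.mem_singleton_iff]
      rw [hEvxs x]
      exact hB k x hw'
    have := hdense.open_subset_closure_inter (hUopen (φ (2 * k + 1))) hw
    exact (closure_minimal hsub (isClosed_singleton.preimage (continuous_stoneCechExtend _))) this
  -- zb lies in the closure of both unions in Z
  have h2k : Filter.Tendsto (fun k : ℕ => 2 * k) Filter.atTop Filter.atTop :=
    (strictMono_mul_left_of_pos (by norm_num : (0:ℕ) < 2)).tendsto_atTop
  have h2k1 : Filter.Tendsto (fun k : ℕ => 2 * k + 1) Filter.atTop Filter.atTop :=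
    ((strictMono_mul_left_of_pos (by norm_num : (0:ℕ) < 2)).add_const 1).tendsto_atTop
  have hzbA : zb ∈ closure (⋃ k, G (φ (2 * k))) := by
    apply mem_closure_of_tendsto ((hconv.comp h2k))
    exact Filter.Eventually.of_forall fun k => Set.mem_iUnion.mpr ⟨k, hzsG _⟩
  have hzbB : zb ∈ closure (⋃ k, G (φ (2 * k + 1))) := by
    apply mem_closure_of_tendsto ((hconv.comp h2k1))
    exact Filter.Eventually.of_forall fun k => Set.mem_iUnion.mpr ⟨k, hzsG _⟩
  -- pull back along the open map and contradict
  obtain ⟨w, hw⟩ := hps zb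
  have hwA : w ∈ closure (⋃ k, U (φ (2 * k))) := by
    have : w ∈ p ⁻¹' closure (⋃ k, G (φ (2 * k))) := by
      simp only [Set.mem_preimage, hw]; exact hzbA
    rwa [hpo.preimage_closure_eq_closure_preimage hpc, Set.preimage_iUnion,
      Set.iUnion_congr (fun k => hUG (φ (2 * k)))] at this
  have hwB : w ∈ closure (⋃ k, U (φ (2 * k + 1))) := by
    have : w ∈ p ⁻¹' closure (⋃ k, G (φ (2 * k + 1))) := by
      simp only [Set.mem_preimage, hw]; exact hzbB
    rwa [hpo.preimage_closure_eq_closure_preimage hpc, Set.preimage_iUnion,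
      Set.iUnion_congr (fun k => hUG (φ (2 * k + 1)))] at this
  have h1 : Ev w = 1 := hclosA hwA
  have h0 : Ev w = 0 := hclosB hwB
  rw [h1] at h0
  exact one_ne_zero (congrArg Subtype.val h0 : (1:ℝ) = 0)
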